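/- Fix c ∈ ℝ and Δq > 0, and for i ≠ j in {a,b} define profits Π_i(p_i, p_j) = (p_i − c)·G( (p_j − p_i) / (Δq + |p_j − p_i|) ). (1) If G is linear, G(r) = 1/2 + r/2, then the pricing game has a unique pure-strategy Nash equilibrium, and in it p_a = p_b = c + Δq. (2) More generally, if G : [−1,1] → [0,1] is strictly increasing with G(r) = 1 − G(−r) and is differentiable at 0 with G'(0) > 0, then any symmetric pure-strategy Nash equilibrium (p_a = p_b) satisfies p_a = p_b = c + Δq/(2·G'(0)); in particular, if a symmetric pure-strategy equilibrium exists it is unique. -/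

import Mathlib

/-- Profit of a firm pricing at p against a competitor pricing at q, with marginal
cost c, quantity dissimilarity dq, and comparability transformation G. -/
noncomputable def profit (G : ℝ → ℝ) (c dq p q : ℝ) : ℝ :=
  (p - c) * G ((q - p) / (dq + |q - p|))

/-- Pure-strategy Nash equilibrium of the symmetric pricing game. -/
def IsNE (G : ℝ → ℝ) (c dq pa pb : ℝ) : Prop :=
  (∀ p, profit G c dq p pb ≤ profit G c dq pa pb) ∧
  (∀ p, profit G c dq p pa ≤ profit G c dq pb pa)

/- Closed form of the linear-G profit when undercutting is absent (p ≥ q). -/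
lemma stmt15_profit_high {c dq p q : ℝ} (hdq : 0 < dq) (h : q ≤ p) :
    profit (fun r => 1/2 + r/2) c dq p q = (p - c) * dq / (2 * (dq + (p - q))) := by
  have habs : |q - p| = p - q := by rw [abs_of_nonpos (by linarith)]; ring
  have hD : dq + (p - q) ≠ 0 := ne_of_gt (by linarith)
  simp only [profit, habs]
  field_simp
  ring

/- Closed form of the linear-G profit when undercutting (p ≤ q). -/
lemma stmt15_profit_low {c dq p q : ℝ} (hdq : 0 < dq) (h : p ≤ q) :
    profit (fun r => 1/2 + r/2) c dq p q
      = (p - c) * (dq + 2 * (q - p)) / (2 * (dq + (q - p))) := by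
  have habs : |q - p| = q - p := abs_of_nonneg (by linarith)
  have hD : dq + (q - p) ≠ 0 := ne_of_gt (by linarith)
  simp only [profit, habs]
  field_simp
  ring

/- Existence: c + dq is a best response to c + dq. -/
lemma stmt15_best_resp {c dq : ℝ} (hdq : 0 < dq) (p : ℝ) :
    profit (fun r => 1/2 + r/2) c dq p (c + dq)
      ≤ profit (fun r => 1/2 + r/2) c dq (c + dq) (c + dq) := by
  rw [stmt15_profit_high hdq le_rfl]
  rcases le_total p (c + dq) with h | h
  · rw [stmt15_profit_low hdq h, div_le_div_iff₀ (by linarith) (by linarith)]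
    nlinarith [mul_nonneg hdq.le (sq_nonneg (dq - (p - c)))]
  · rw [stmt15_profit_high hdq h, div_le_div_iff₀ (by linarith) (by linarith)]
    nlinarith

/- No best response exists against an opponent pricing strictly below c + dq:
the supremum dq/2 is approached but never attained. -/
lemma stmt15_lemA {c dq q pa : ℝ} (hdq : 0 < dq) (hq : q < c + dq)
    (hBR : ∀ p, profit (fun r => 1/2 + r/2) c dq p q
      ≤ profit (fun r => 1/2 + r/2) c dq pa q) : False := by
  set M := profit (fun r => 1/2 + r/2) c dq pa q with hM
  have hMlt : M < dq / 2 := by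
    rcases le_total pa q with h | h
    · rw [hM, stmt15_profit_low hdq h, div_lt_div_iff₀ (by linarith) (by norm_num)]
      nlinarith [mul_nonneg (show (0:ℝ) ≤ q - pa by linarith)
        (show (0:ℝ) ≤ c + dq - q by linarith), sq_nonneg (q - pa),
        mul_pos hdq (show (0:ℝ) < c + dq - q by linarith)]
    · rw [hM, stmt15_profit_high hdq h, div_lt_div_iff₀ (by linarith) (by norm_num)]
      nlinarith [mul_pos hdq (show (0:ℝ) < c + dq - q by linarith)]
  have h2M : 0 < dq - 2 * M := by linarith
  set X := max dq (2 * M * (dq - (q - c)) / (dq - 2 * M) + 1) with hX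
  have hXdq : dq ≤ X := le_max_left _ _
  have hXgt : 2 * M * (dq - (q - c)) / (dq - 2 * M) < X :=
    lt_of_lt_of_le (lt_add_one _) (le_max_right _ _)
  have hkey : 2 * M * (dq - (q - c)) < X * (dq - 2 * M) := by
    rw [div_lt_iff₀ h2M] at hXgt; linarith
  have hple : q ≤ c + X := by linarith
  have hle := hBR (c + X)
  rw [stmt15_profit_high hdq hple] at hle
  rw [div_le_iff₀ (show (0:ℝ) < 2 * (dq + (c + X - q)) by nlinarith)] at hle
  nlinarith

/- No equilibrium where a firm prices ≥ its opponent while the opponent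
prices strictly above c + dq: undercutting is strictly profitable. -/
lemma stmt15_lemB {c dq po ps : ℝ} (hdq : 0 < dq) (hpo : c + dq < po) (hps : po ≤ ps)
    (hBR : ∀ p, profit (fun r => 1/2 + r/2) c dq p po
      ≤ profit (fun r => 1/2 + r/2) c dq ps po) : False := by
  have h1 : profit (fun r => 1/2 + r/2) c dq ps po ≤ (po - c) / 2 := by
    rw [stmt15_profit_high hdq hps, div_le_div_iff₀ (by linarith) (by norm_num)]
    nlinarith [mul_nonneg (show (0:ℝ) ≤ ps - po by linarith)
      (show (0:ℝ) ≤ po - c - dq by linarith)]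
  have he : 0 < (po - c - dq) / 4 := by linarith
  have h2 : (po - c) / 2
      < profit (fun r => 1/2 + r/2) c dq (po - (po - c - dq) / 4) po := by
    rw [stmt15_profit_low hdq (by linarith), div_lt_div_iff₀ (by norm_num) (by linarith)]
    nlinarith [mul_pos he he]
  exact absurd (hBR (po - (po - c - dq) / 4)) (not_le.2 (lt_of_le_of_lt h1 h2))

/- Pricing exactly at c + dq is not a best response to an opponent pricing
strictly above c + dq. -/
lemma stmt15_lemC {c dq po : ℝ} (hdq : 0 < dq) (hpo : c + dq < po)
    (hBR : ∀ p, profit (fun r => 1/2 + r/2) c dq p po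
      ≤ profit (fun r => 1/2 + r/2) c dq (c + dq) po) : False := by
  have h := hBR ((po + c + dq) / 2)
  rw [stmt15_profit_low hdq (by linarith : (po + c + dq) / 2 ≤ po),
    stmt15_profit_low hdq (by linarith : c + dq ≤ po),
    div_le_div_iff₀ (by linarith) (by linarith)] at h
  nlinarith [mul_pos (mul_pos (show (0:ℝ) < po - c + dq by linarith)
    (show (0:ℝ) < po - c - dq by linarith)) (show (0:ℝ) < po - c - dq by linarith)]

/- The map s ↦ s/(dq + |s|) is differentiable at 0 with derivative 1/dq. -/
lemma stmt15_phi_deriv {dq : ℝ} (hdq : 0 < dq) :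
    HasDerivAt (fun s : ℝ => s / (dq + |s|)) (1 / dq) 0 := by
  rw [hasDerivAt_iff_tendsto_slope]
  have hcong : slope (fun s : ℝ => s / (dq + |s|)) 0 =ᶠ[nhdsWithin (0:ℝ) {(0:ℝ)}ᶜ]
      fun s : ℝ => 1 / (dq + |s|) := by
    filter_upwards [self_mem_nhdsWithin] with s hs
    have hsne : s ≠ 0 := hs
    have hD : dq + |s| ≠ 0 := by positivity
    rw [slope_def_field]
    field_simp
    ring
  rw [Filter.tendsto_congr' hcong]
  have hc : ContinuousAt (fun s : ℝ => 1 / (dq + |s|)) 0 := by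
    apply ContinuousAt.div continuousAt_const
      (continuousAt_const.add continuous_abs.continuousAt)
    simp [hdq.ne']
  have h00 : (fun s : ℝ => 1 / (dq + |s|)) 0 = 1 / dq := by simp
  exact h00 ▸ (hc.tendsto.mono_left nhdsWithin_le_nhds)

/- Part 2: first-order condition at a symmetric equilibrium. -/
lemma stmt15_part2 {c dq : ℝ} (hdq : 0 < dq) (G : ℝ → ℝ)
    (hsym : ∀ r ∈ Set.Icc (-1:ℝ) 1, G r ∈ Set.Icc (0:ℝ) 1 ∧ G r = 1 - G (-r))
    (hdiff : DifferentiableAt ℝ G 0) (hderiv : 0 < deriv G 0)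
    (p : ℝ) (hNE : ∀ p', profit G c dq p' p ≤ profit G c dq p p) :
    p = c + dq / (2 * deriv G 0) := by
  have hG0 : G 0 = 1 / 2 := by
    have h := (hsym 0 (by norm_num)).2
    simp only [neg_zero] at h
    linarith
  have h1 : HasDerivAt (fun t : ℝ => p - t) (-1) p := by
    simpa using (hasDerivAt_id p).const_sub p
  have h0 : (fun t : ℝ => p - t) p = 0 := by simp
  have hg : HasDerivAt (fun t : ℝ => (p - t) / (dq + |p - t|)) (1 / dq * (-1)) p := by
    have := (h0 ▸ stmt15_phi_deriv hdq : HasDerivAt (fun s : ℝ => s / (dq + |s|)) (1/dq)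
      ((fun t : ℝ => p - t) p)).comp p h1
    simpa [Function.comp_def] using this
  have hgp : (fun t : ℝ => (p - t) / (dq + |p - t|)) p = 0 := by simp
  have hGg : HasDerivAt (fun t : ℝ => G ((p - t) / (dq + |p - t|)))
      (deriv G 0 * (1 / dq * (-1))) p := by
    have hG : HasDerivAt G (deriv G 0)
        ((fun t : ℝ => (p - t) / (dq + |p - t|)) p) := by
      rw [hgp]; exact hdiff.hasDerivAt
    simpa [Function.comp_def] using hG.comp p hg
  have hf : HasDerivAt (fun t : ℝ => (t - c) * G ((p - t) / (dq + |p - t|)))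
      (1 * G ((p - p) / (dq + |p - p|)) + (p - c) * (deriv G 0 * (1 / dq * (-1)))) p :=
    ((hasDerivAt_id p).sub_const c).mul hGg
  have hmax : IsLocalMax (fun t : ℝ => (t - c) * G ((p - t) / (dq + |p - t|))) p :=
    Filter.Eventually.of_forall fun x => hNE x
  have hzero := hmax.hasDerivAt_eq_zero hf
  have hsimp : (p - p) / (dq + |p - p|) = 0 := by simp
  rw [hsimp, hG0] at hzero
  have hd0 : deriv G 0 ≠ 0 := ne_of_gt hderiv
  have hkey : (p - c) * deriv G 0 = dq / 2 := by
    field_simp at hzero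
    linarith
  have : p - c = dq / (2 * deriv G 0) := by
    rw [eq_div_iff (by positivity)]
    linarith [hkey]
  linarith

/-- Proposition 3 — (1) with linear G the unique pure-strategy
equilibrium has p_a = p_b = c + Δq; (2) for general G differentiable at 0, any
symmetric pure-strategy equilibrium has p_a = p_b = c + Δq/(2G'(0)). -/
theorem stmt_15 (c dq : ℝ) (hdq : 0 < dq) :
    (IsNE (fun r => 1/2 + r/2) c dq (c + dq) (c + dq) ∧
      ∀ pa pb, IsNE (fun r => 1/2 + r/2) c dq pa pb →
        pa = c + dq ∧ pb = c + dq) ∧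
    (∀ G : ℝ → ℝ, StrictMonoOn G (Set.Icc (-1) 1) →
      (∀ r ∈ Set.Icc (-1:ℝ) 1, G r ∈ Set.Icc (0:ℝ) 1 ∧ G r = 1 - G (-r)) →
      DifferentiableAt ℝ G 0 → 0 < deriv G 0 →
      ∀ p, IsNE G c dq p p → p = c + dq / (2 * deriv G 0)) := by
  refine ⟨⟨⟨stmt15_best_resp hdq, stmt15_best_resp hdq⟩, ?_⟩, ?_⟩
  · intro pa pb hNE
    obtain ⟨ha, hb⟩ := hNE
    have hpa : c + dq ≤ pa := by
      by_contra h
      exact stmt15_lemA hdq (lt_of_not_ge h) hb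
    have hpb : c + dq ≤ pb := by
      by_contra h
      exact stmt15_lemA hdq (lt_of_not_ge h) ha
    have hpb' : pb = c + dq := by
      rcases eq_or_lt_of_le hpb with h | h
      · exact h.symm
      · exfalso
        rcases le_or_gt pb pa with hle | hlt
        · exact stmt15_lemB hdq h hle ha
        · rcases eq_or_lt_of_le hpa with h2 | h2
          · exact stmt15_lemC hdq h (by rw [h2]; exact ha)
          · exact stmt15_lemB hdq h2 hlt.le hb
    have hpa' : pa = c + dq := by
      rcases eq_or_lt_of_le hpa with h | h
      · exact h.symm
      · exact absurd (stmt15_lemC hdq h (by rw [← hpb']; exact hb)) not_false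
    exact ⟨hpa', hpb'⟩
  · intro G hmono hsym hdiff hderiv p hNE
    exact stmt15_part2 hdq G hsym hdiff hderiv p hNE.1
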